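/- Let B be an N×N real matrix and C_E, C_cor be N×N real symmetric positive semidefinite matrices; for l ∈ ℕ set C(l) = B^l C_E (B^T)^l. Let e_1,…,e_k be random vectors in ℝ^N with E[e_i] = 0 and E[e_i e_j^T] = C_cor + δ_{ij} C_E for all i,j (stationary correlated inputs). Let G be a real k×n matrix (k ≤ n) of rank k and l_1,…,l_n ∈ ℕ. Define Λ = diag(trace(C(l_1)),…,trace(C(l_n))), the n×n matrix Ψ with entries Ψ_{ij} = trace(B^{l_i} C_cor (B^T)^{l_j}), the vector h = G^T 1_k ∈ ℝ^n (1_k the all-ones vector), and Λ̃ = σ_max(G^T G)·Λ + diag(h)·Ψ·diag(h)^T, where σ_max(G^T G) is the largest eigenvalue of G^T G. Assume Λ̃ is positive definite. Define the encoded errors ε_i = Σ_{j=1}^k G_{ji} e_j, the decoding matrix L̃ = (G Λ̃^{-1} G^T)^{-1} G Λ̃^{-1}, and the decoded error matrix E = [B^{l_1} ε_1, …, B^{l_n} ε_n] · L̃^T. Then E[‖E‖_F^2] ≤ trace((G Λ̃^{-1} G^T)^{-1}), where ‖·‖_F is the Frobenius norm. -/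

import Mathlib

open MeasureTheory Matrix
open scoped BigOperators

/-- `C(l) = Bˡ C_E (Bᵀ)ˡ`. -/
noncomputable def matC {N : ℕ} (B CE : Matrix (Fin N) (Fin N) ℝ) (l : ℕ) :
    Matrix (Fin N) (Fin N) ℝ := B ^ l * CE * (Bᵀ) ^ l

/-- largest eigenvalue of a real symmetric matrix. -/
noncomputable def maxEigR {n : ℕ} (A : Matrix (Fin n) (Fin n) ℝ) : ℝ :=
  if h : A.IsHermitian then ⨆ i, h.eigenvalues i else 0

/- ### Auxiliary lemmas -/

open scoped MatrixOrder in
noncomputable def psdSqrt {m : ℕ} (Q : Matrix (Fin m) (Fin m) ℝ) : Matrix (Fin m) (Fin m) ℝ :=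
  CFC.sqrt Q

open scoped MatrixOrder in
lemma psdSqrt_spec {m : ℕ} {Q : Matrix (Fin m) (Fin m) ℝ} (hQ : Q.PosSemidef) :
    (psdSqrt Q)ᴴ = psdSqrt Q ∧ psdSqrt Q * psdSqrt Q = Q :=
  ⟨(Matrix.nonneg_iff_posSemidef.mp (CFC.sqrt_nonneg Q)).1,
    CFC.sqrt_mul_sqrt_self Q (Matrix.nonneg_iff_posSemidef.mpr hQ)⟩

lemma posSemidef_trace_nonneg {m : ℕ} {Q : Matrix (Fin m) (Fin m) ℝ}
    (hQ : Q.PosSemidef) : 0 ≤ Q.trace := by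
  rw [Matrix.trace]
  refine Finset.sum_nonneg fun i _ => ?_
  have := hQ.diag_nonneg (i := i)
  simpa [Matrix.diag] using this

lemma trace_mul_psd_nonneg {m : ℕ} {P Q : Matrix (Fin m) (Fin m) ℝ}
    (hP : P.PosSemidef) (hQ : Q.PosSemidef) : 0 ≤ (P * Q).trace := by
  obtain ⟨S, hS, rfl⟩ : ∃ S : Matrix (Fin m) (Fin m) ℝ, Sᴴ = S ∧ Q = S * S :=
    ⟨psdSqrt Q, (psdSqrt_spec hQ).1, (psdSqrt_spec hQ).2.symm⟩
  have h2 : (P * (S * S)).trace = (S * P * S).trace := by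
    rw [← Matrix.mul_assoc, Matrix.trace_mul_comm, Matrix.mul_assoc]
  rw [h2]
  have : (Sᴴ * P * S).PosSemidef := hP.conjTranspose_mul_mul_same _
  rw [hS] at this
  exact posSemidef_trace_nonneg this

lemma quad_le_maxEigR {m : ℕ} {A : Matrix (Fin m) (Fin m) ℝ} (hA : A.IsHermitian)
    (x : Fin m → ℝ) : x ⬝ᵥ (A *ᵥ x) ≤ maxEigR A * (x ⬝ᵥ x) := by
  rw [maxEigR, dif_pos hA]
  set U : Matrix (Fin m) (Fin m) ℝ := (hA.eigenvectorUnitary : Matrix (Fin m) (Fin m) ℝ)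
  set y : Fin m → ℝ := (star U) *ᵥ x with hy
  have hU : U * star U = 1 := (Matrix.mem_unitaryGroup_iff).mp hA.eigenvectorUnitary.2
  have hspec : A = U * Matrix.diagonal hA.eigenvalues * star U := by
    have := hA.spectral_theorem
    simpa using this
  have h1 : x ⬝ᵥ (A *ᵥ x) = ∑ i, hA.eigenvalues i * (y i)^2 := by
    have hxU : x ᵥ* U = y := by
      rw [hy, Matrix.star_eq_conjTranspose,
        Matrix.conjTranspose_eq_transpose_of_trivial U, Matrix.mulVec_transpose]
    conv_lhs => rw [hspec, ← Matrix.mulVec_mulVec, ← Matrix.mulVec_mulVec,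
      Matrix.dotProduct_mulVec x U]
    rw [hxU]
    simp [dotProduct, Matrix.mulVec_diagonal, pow_two]
    exact Finset.sum_congr rfl fun i _ => by ring
  have h2 : x ⬝ᵥ x = ∑ i, (y i)^2 := by
    have : y ⬝ᵥ y = x ⬝ᵥ ((U * star U) *ᵥ x) := by
      rw [← Matrix.mulVec_mulVec, Matrix.dotProduct_mulVec x U]
      congr 1
      rw [hy, Matrix.star_eq_conjTranspose,
        Matrix.conjTranspose_eq_transpose_of_trivial U, Matrix.mulVec_transpose]
    rw [hU] at this
    simp only [Matrix.one_mulVec] at this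
    rw [← this]
    simp [dotProduct, pow_two]
  rw [h1, h2, Finset.mul_sum]
  refine Finset.sum_le_sum fun i _ => ?_
  have hle : hA.eigenvalues i ≤ ⨆ j, hA.eigenvalues j :=
    le_ciSup (Set.Finite.bddAbove (Set.finite_range _)) i
  exact mul_le_mul_of_nonneg_right hle (sq_nonneg _)

lemma sum_mul_eq_trace {m : ℕ} (P Q : Matrix (Fin m) (Fin m) ℝ) :
    ∑ i, ∑ j, P i j * Q i j = (Pᵀ * Q).trace := by
  rw [Matrix.trace, Finset.sum_comm]
  simp [Matrix.diag, Matrix.mul_apply]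

lemma trace_mul_transpose_sum {N m : ℕ} (P Q : Matrix (Fin N) (Fin m) ℝ) :
    (P * Qᵀ).trace = ∑ a, ∑ b, P a b * Q a b := by
  simp [Matrix.trace, Matrix.diag, Matrix.mul_apply]

lemma triple_sum_trace {N : ℕ} (P C Q : Matrix (Fin N) (Fin N) ℝ) :
    ∑ a, ∑ b, ∑ c, P a b * C b c * Q a c = (P * C * Qᵀ).trace := by
  rw [trace_mul_transpose_sum (P * C) Q]
  refine Finset.sum_congr rfl fun a _ => ?_
  rw [Finset.sum_comm]
  refine Finset.sum_congr rfl fun c _ => ?_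
  rw [Matrix.mul_apply, Finset.sum_mul]

lemma sum_swap_pair {α β γ δ : Type*} [Fintype α] [Fintype β] [Fintype γ] [Fintype δ]
    (f : α → β → γ → δ → ℝ) :
    ∑ a, ∑ b, ∑ c, ∑ d, f a b c d = ∑ c, ∑ d, ∑ a, ∑ b, f a b c d :=
  calc ∑ a, ∑ b, ∑ c, ∑ d, f a b c d
      = ∑ a, ∑ c, ∑ b, ∑ d, f a b c d :=
        Finset.sum_congr rfl fun a _ => Finset.sum_comm
    _ = ∑ c, ∑ a, ∑ b, ∑ d, f a b c d := Finset.sum_comm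
    _ = ∑ c, ∑ a, ∑ d, ∑ b, f a b c d :=
        Finset.sum_congr rfl fun c _ => Finset.sum_congr rfl fun a _ => Finset.sum_comm
    _ = ∑ c, ∑ d, ∑ a, ∑ b, f a b c d :=
        Finset.sum_congr rfl fun c _ => Finset.sum_comm

lemma integral_sum_mul_sum {Ω : Type*} [MeasurableSpace Ω] (μ : Measure Ω)
    {ι κ : Type*} [Fintype ι] [Fintype κ]
    (f : ι → Ω → ℝ) (g : κ → Ω → ℝ) (c : ι → ℝ) (d : κ → ℝ)
    (hint : ∀ i j, Integrable (fun ω => f i ω * g j ω) μ) :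
    Integrable (fun ω => (∑ i, c i * f i ω) * (∑ j, d j * g j ω)) μ ∧
    ∫ ω, (∑ i, c i * f i ω) * (∑ j, d j * g j ω) ∂μ
      = ∑ i, ∑ j, (c i * d j) * ∫ ω, f i ω * g j ω ∂μ := by
  have heq : (fun ω => (∑ i, c i * f i ω) * (∑ j, d j * g j ω))
      = fun ω => ∑ i, ∑ j, (c i * d j) * (f i ω * g j ω) := by
    funext ω
    rw [Finset.sum_mul_sum]
    exact Finset.sum_congr rfl fun i _ => Finset.sum_congr rfl fun j _ => by ring
  have hint2 : ∀ (i : ι), Integrable (fun ω => ∑ j, (c i * d j) * (f i ω * g j ω)) μ :=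
    fun i => integrable_finset_sum _ fun j _ => ((hint i j).const_mul _)
  rw [heq]
  refine ⟨integrable_finset_sum _ fun i _ => hint2 i, ?_⟩
  rw [integral_finset_sum _ (fun i _ => hint2 i)]
  refine Finset.sum_congr rfl fun i _ => ?_
  rw [integral_finset_sum _ (fun j _ => ((hint i j).const_mul _))]
  exact Finset.sum_congr rfl fun j _ => integral_const_mul _ _

lemma dotProduct_mulVec_sum {m : ℕ} (x : Fin m → ℝ) (D : Matrix (Fin m) (Fin m) ℝ) :
    x ⬝ᵥ (D *ᵥ x) = ∑ i, ∑ j, x i * D i j * x j := by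
  simp [dotProduct, Matrix.mulVec, Finset.mul_sum, mul_assoc]

lemma exists_mulVec_preimage {k n : ℕ} (G : Matrix (Fin k) (Fin n) ℝ) (hG : G.rank = k)
    (x : Fin k → ℝ) : ∃ z, G *ᵥ z = x := by
  have hr : LinearMap.range G.mulVecLin = ⊤ := by
    apply Submodule.eq_top_of_finrank_eq
    rw [show Module.finrank ℝ (LinearMap.range G.mulVecLin) = G.rank from rfl, hG,
      Module.finrank_fin_fun]
  have := LinearMap.range_eq_top.mp hr x
  obtain ⟨z, hz⟩ := this
  exact ⟨z, by rw [← Matrix.mulVecLin_apply]; exact hz⟩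

lemma transpose_mulVec_eq_zero {k n : ℕ} (G : Matrix (Fin k) (Fin n) ℝ) (hG : G.rank = k)
    (x : Fin k → ℝ) (h0 : Gᵀ *ᵥ x = 0) : x = 0 := by
  obtain ⟨z, hz⟩ := exists_mulVec_preimage G hG x
  have hx : x ⬝ᵥ x = 0 := by
    have h1 : x ⬝ᵥ x = (G *ᵥ z) ⬝ᵥ x := by rw [hz]
    rw [h1, dotProduct_comm, Matrix.dotProduct_mulVec, ← Matrix.mulVec_transpose, h0]
    simp
  exact dotProduct_self_eq_zero.mp hx
/-- Theorem 2: MSE bound for stationary correlated inputs.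
Errors `e₁,…,e_k` with mean zero and `E[eᵢ eⱼᵀ] = C_cor + δᵢⱼ C_E`; generator matrix `G`
of rank `k`; `Λ = diag(trace C(lᵢ))`; `Ψᵢⱼ = trace(B^{lᵢ} C_cor (Bᵀ)^{lⱼ})`;
`h = Gᵀ 1_k`; `Λ̃ = σ_max(GᵀG)·Λ + diag(h)·Ψ·diag(h)ᵀ` assumed positive definite;
decoder `L̃ = (G Λ̃⁻¹ Gᵀ)⁻¹ G Λ̃⁻¹`; decoded error `E = [B^{l₁} ε₁,…,B^{l_n} ε_n]·L̃ᵀ`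
with `εᵢ = Σ_j G_{ji} e_j`.  Then `E[‖E‖_F²] ≤ trace((G Λ̃⁻¹ Gᵀ)⁻¹)`. -/
theorem coded_linear_inverse_mse_bound_stationary
    {N k n : ℕ} (hk : 0 < k) (hkn : k ≤ n)
    (B CE Ccor : Matrix (Fin N) (Fin N) ℝ)
    (hCE : CE.PosSemidef) (hCcor : Ccor.PosSemidef)
    {Ω : Type*} [MeasurableSpace Ω] (μ : Measure Ω) [IsProbabilityMeasure μ]
    (e : Fin k → Ω → Fin N → ℝ)
    (h_meas : ∀ i a, Measurable fun ω => e i ω a)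
    (h_int : ∀ i j a b, Integrable (fun ω => e i ω a * e j ω b) μ)
    (h_mean : ∀ i a, ∫ ω, e i ω a ∂μ = 0)
    (h_cov : ∀ i j a b, ∫ ω, e i ω a * e j ω b ∂μ =
      Ccor a b + if i = j then CE a b else 0)
    (G : Matrix (Fin k) (Fin n) ℝ) (hG : G.rank = k)
    (l : Fin n → ℕ)
    (Λ : Matrix (Fin n) (Fin n) ℝ)
    (hΛ : Λ = Matrix.diagonal fun i => (matC B CE (l i)).trace)
    (Ψ : Matrix (Fin n) (Fin n) ℝ)
    (hΨ : ∀ i j, Ψ i j = (B ^ l i * Ccor * (Bᵀ) ^ l j).trace)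
    (h1 : Fin n → ℝ) (hh1 : ∀ i, h1 i = ∑ j, G j i)
    (Λt : Matrix (Fin n) (Fin n) ℝ)
    (hΛt : Λt = maxEigR (Gᵀ * G) • Λ +
      Matrix.diagonal h1 * Ψ * (Matrix.diagonal h1)ᵀ)
    (hΛt_pd : Λt.PosDef)
    (L : Matrix (Fin k) (Fin n) ℝ)
    (hL : L = (G * Λt⁻¹ * Gᵀ)⁻¹ * G * Λt⁻¹)
    (ε : Fin n → Ω → Fin N → ℝ)
    (hε : ∀ i ω a, ε i ω a = ∑ j, G j i * e j ω a)
    (E : Ω → Matrix (Fin N) (Fin k) ℝ)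
    (hE : ∀ ω a c, E ω a c = ∑ i, ((B ^ l i) *ᵥ ε i ω) a * L c i) :
    (∫ ω, ∑ a, ∑ c, (E ω a c) ^ 2 ∂μ) ≤ ((G * Λt⁻¹ * Gᵀ)⁻¹).trace := by
  classical
  set σ : ℝ := maxEigR (Gᵀ * G) with hσ
  set A : Matrix (Fin n) (Fin n) ℝ := Gᵀ * G with hA
  set P : Fin n → Matrix (Fin N) (Fin N) ℝ := fun i => B ^ l i with hP
  set Φ : Fin n → Fin n → ℝ := fun i j => (P i * CE * (P j)ᵀ).trace with hΦ
  set M : Fin n → Ω → Fin N → ℝ := fun i ω => (P i) *ᵥ ε i ω with hM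
  have hCEt : CEᵀ = CE := by
    rw [← Matrix.conjTranspose_eq_transpose_of_trivial]; exact hCE.1
  have hCcort : Ccorᵀ = Ccor := by
    rw [← Matrix.conjTranspose_eq_transpose_of_trivial]; exact hCcor.1
  have hAherm : A.IsHermitian := by
    rw [Matrix.IsHermitian, Matrix.conjTranspose_eq_transpose_of_trivial, hA,
      Matrix.transpose_mul, Matrix.transpose_transpose]
  have hAsym : ∀ i j, A i j = A j i := fun i j => by
    rw [hA]; simp only [Matrix.mul_apply, Matrix.transpose_apply]
    exact Finset.sum_congr rfl fun p _ => mul_comm _ _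
  have hΦsym : ∀ i j, Φ i j = Φ j i := by
    intro i j
    rw [hΦ]
    dsimp only
    rw [← Matrix.trace_transpose, Matrix.transpose_mul, Matrix.transpose_mul,
      Matrix.transpose_transpose, hCEt, Matrix.mul_assoc]
  -- Step 1: covariance of ε
  have key1 : ∀ i j b c, Integrable (fun ω => ε i ω b * ε j ω c) μ ∧
      ∫ ω, ε i ω b * ε j ω c ∂μ
        = ∑ p, ∑ q, (G p i * G q j) * (Ccor b c + if p = q then CE b c else 0) := by
    intro i j b c
    have h := integral_sum_mul_sum μ (fun p ω => e p ω b) (fun q ω => e q ω c)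
      (fun p => G p i) (fun q => G q j) (fun p q => h_int p q b c)
    have heq : (fun ω => ε i ω b * ε j ω c)
        = fun ω => (∑ p, G p i * e p ω b) * (∑ q, G q j * e q ω c) := by
      funext ω; rw [hε, hε]
    rw [heq]
    refine ⟨h.1, ?_⟩
    rw [h.2]
    exact Finset.sum_congr rfl fun p _ => Finset.sum_congr rfl fun q _ => by rw [h_cov]
  have hεint : ∀ i j b c, Integrable (fun ω => ε i ω b * ε j ω c) μ :=
    fun i j b c => (key1 i j b c).1
  have hεcov : ∀ i j b c, ∫ ω, ε i ω b * ε j ω c ∂μ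
      = h1 i * h1 j * Ccor b c + A i j * CE b c := by
    intro i j b c
    rw [(key1 i j b c).2]
    have hrow : ∀ p : Fin k, ∑ q, (G p i * G q j) * (Ccor b c + if p = q then CE b c else 0)
        = G p i * (h1 j * Ccor b c) + (G p i * G p j) * CE b c := by
      intro p
      have : ∀ q : Fin k, (G p i * G q j) * (Ccor b c + if p = q then CE b c else 0)
          = (G p i * Ccor b c) * G q j + (if q = p then (G p i * G q j) * CE b c else 0) := by
        intro q
        rcases eq_or_ne p q with h | h
        · subst h; simp; ring
        · rw [if_neg h, if_neg (Ne.symm h)]; ring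
      rw [Finset.sum_congr rfl fun q _ => this q, Finset.sum_add_distrib,
        ← Finset.mul_sum, Finset.sum_ite_eq' Finset.univ p
          (fun q => (G p i * G q j) * CE b c)]
      simp [hh1]
      ring
    rw [Finset.sum_congr rfl fun p _ => hrow p, Finset.sum_add_distrib, ← Finset.sum_mul,
      ← Finset.sum_mul]
    have h1i : ∑ p, G p i = h1 i := (hh1 i).symm
    have hAij : ∑ p, G p i * G p j = A i j := by
      rw [hA]; simp only [Matrix.mul_apply, Matrix.transpose_apply]
    rw [h1i, hAij]
    ring
  -- Step 2: covariance of M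
  have key2 : ∀ (i j : Fin n) (a a' : Fin N), Integrable (fun ω => M i ω a * M j ω a') μ ∧
      ∫ ω, M i ω a * M j ω a' ∂μ
        = ∑ b, ∑ c, (P i a b * P j a' c) * (h1 i * h1 j * Ccor b c + A i j * CE b c) := by
    intro i j a a'
    have h := integral_sum_mul_sum μ (fun b ω => ε i ω b) (fun c ω => ε j ω c)
      (fun b => P i a b) (fun c => P j a' c) (fun b c => hεint i j b c)
    have heq : (fun ω => M i ω a * M j ω a')
        = fun ω => (∑ b, P i a b * ε i ω b) * (∑ c, P j a' c * ε j ω c) := by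
      funext ω
      rw [hM]
      simp [Matrix.mulVec, dotProduct]
    rw [heq]
    refine ⟨h.1, ?_⟩
    rw [h.2]
    exact Finset.sum_congr rfl fun b _ => Finset.sum_congr rfl fun c _ => by rw [hεcov]
  -- Step 3: second moments of M entries summed over coordinates
  have hW : ∀ i j, ∫ ω, ∑ a, M i ω a * M j ω a ∂μ
      = h1 i * h1 j * Ψ i j + A i j * Φ i j := by
    intro i j
    rw [integral_finset_sum _ (fun a _ => (key2 i j a a).1),
      Finset.sum_congr rfl fun a _ => (key2 i j a a).2]
    have expand : ∀ (a b c : Fin N),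
        (P i a b * P j a c) * (h1 i * h1 j * Ccor b c + A i j * CE b c)
        = h1 i * h1 j * (P i a b * Ccor b c * P j a c)
          + A i j * (P i a b * CE b c * P j a c) := fun a b c => by ring
    calc ∑ a, ∑ b, ∑ c, (P i a b * P j a c) * (h1 i * h1 j * Ccor b c + A i j * CE b c)
        = ∑ a, ∑ b, ∑ c, (h1 i * h1 j * (P i a b * Ccor b c * P j a c)
            + A i j * (P i a b * CE b c * P j a c)) := by
          exact Finset.sum_congr rfl fun a _ => Finset.sum_congr rfl fun b _ =>
            Finset.sum_congr rfl fun c _ => expand a b c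
      _ = h1 i * h1 j * (∑ a, ∑ b, ∑ c, P i a b * Ccor b c * P j a c)
            + A i j * (∑ a, ∑ b, ∑ c, P i a b * CE b c * P j a c) := by
          simp only [Finset.sum_add_distrib, Finset.mul_sum]
      _ = h1 i * h1 j * Ψ i j + A i j * Φ i j := by
          rw [triple_sum_trace, triple_sum_trace, hΨ, hΦ]
          dsimp only
          rw [hP]
          dsimp only
          rw [Matrix.transpose_pow]
  -- Step 4: pointwise expansion of the Frobenius norm
  have hEsum : ∀ ω, ∑ a, ∑ c, (E ω a c)^2
      = ∑ i, ∑ j, (∑ c, L c i * L c j) * (∑ a, M i ω a * M j ω a) := by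
    intro ω
    calc ∑ a, ∑ c, (E ω a c)^2
        = ∑ a, ∑ c, ∑ i, ∑ j, (L c i * L c j) * (M i ω a * M j ω a) := by
          refine Finset.sum_congr rfl fun a _ => Finset.sum_congr rfl fun c _ => ?_
          rw [hE, sq, Finset.sum_mul_sum]
          refine Finset.sum_congr rfl fun i _ => Finset.sum_congr rfl fun j _ => ?_
          simp only [hM, hP]
          ring
      _ = ∑ i, ∑ j, ∑ a, ∑ c, (L c i * L c j) * (M i ω a * M j ω a) :=
          sum_swap_pair _
      _ = ∑ i, ∑ j, (∑ c, L c i * L c j) * (∑ a, M i ω a * M j ω a) := by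
          refine Finset.sum_congr rfl fun i _ => Finset.sum_congr rfl fun j _ => ?_
          rw [Finset.sum_comm, ← Finset.sum_mul_sum]
  -- Step 5: integrate
  have hint_sum : ∀ i j, Integrable (fun ω => ∑ a, M i ω a * M j ω a) μ :=
    fun i j => integrable_finset_sum _ fun a _ => (key2 i j a a).1
  have hLHS : ∫ ω, ∑ a, ∑ c, (E ω a c)^2 ∂μ
      = ∑ i, ∑ j, ((Lᵀ * L) i j) * (h1 i * h1 j * Ψ i j + A i j * Φ i j) := by
    have heq : (fun ω => ∑ a, ∑ c, (E ω a c)^2)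
        = fun ω => ∑ i, ∑ j, (∑ c, L c i * L c j) * (∑ a, M i ω a * M j ω a) :=
      funext hEsum
    rw [heq, integral_finset_sum _ (fun i _ => integrable_finset_sum _
      fun j _ => ((hint_sum i j).const_mul _))]
    refine Finset.sum_congr rfl fun i _ => ?_
    rw [integral_finset_sum _ (fun j _ => (hint_sum i j).const_mul _)]
    refine Finset.sum_congr rfl fun j _ => ?_
    rw [integral_const_mul, hW i j]
    congr 1
  -- Step 6: the gap matrix D is positive semidefinite
  have hmatC : ∀ i : Fin n, (matC B CE (l i)).trace = Φ i i := by
    intro i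
    simp only [matC, hΦ, hP, Matrix.transpose_pow]
  set Wm : Matrix (Fin n) (Fin n) ℝ :=
    Matrix.of (fun i j => h1 i * h1 j * Ψ i j + A i j * Φ i j) with hWm
  set D : Matrix (Fin n) (Fin n) ℝ := Λt - Wm with hDdef
  have hD : ∀ i j, D i j = σ * (if i = j then Φ i i else 0) - A i j * Φ i j := by
    intro i j
    have hmid : (Matrix.diagonal h1 * Ψ * (Matrix.diagonal h1)ᵀ) i j
        = h1 i * Ψ i j * h1 j := by
      rw [Matrix.diagonal_transpose, Matrix.mul_diagonal, Matrix.diagonal_mul]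
    have hΛe : Λ i j = if i = j then Φ i i else 0 := by
      rw [hΛ, Matrix.diagonal_apply]
      by_cases hij : i = j
      · subst hij; rw [if_pos rfl, if_pos rfl, hmatC]
      · rw [if_neg hij, if_neg hij]
    rw [hDdef, Matrix.sub_apply, hΛt, Matrix.add_apply, Matrix.smul_apply, hmid, hΛe, hWm]
    simp only [Matrix.of_apply, smul_eq_mul, hσ]
    ring
  have hDherm : D.IsHermitian := by
    rw [Matrix.IsHermitian, Matrix.conjTranspose_eq_transpose_of_trivial]
    ext i j
    rw [Matrix.transpose_apply, hD, hD, hAsym j i, hΦsym j i]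
    by_cases hij : i = j
    · subst hij; rfl
    · rw [if_neg (Ne.symm hij), if_neg hij]
  have hDpsd : D.PosSemidef := by
    refine Matrix.PosSemidef.of_dotProduct_mulVec_nonneg hDherm fun x => ?_
    rw [star_trivial]
    have hquad : x ⬝ᵥ (D *ᵥ x)
        = σ * (∑ i, x i^2 * Φ i i) - ∑ i, ∑ j, (x i * A i j * x j) * Φ i j := by
      rw [dotProduct_mulVec_sum]
      have hterm : ∀ i j, x i * D i j * x j
          = σ * (if i = j then x i^2 * Φ i i else 0) - (x i * A i j * x j) * Φ i j := by
        intro i j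
        rw [hD]
        by_cases hij : i = j
        · subst hij; rw [if_pos rfl, if_pos rfl]; ring
        · simp only [if_neg hij]; ring
      rw [Finset.sum_congr rfl fun i _ => Finset.sum_congr rfl fun j _ => hterm i j]
      simp only [Finset.sum_sub_distrib]
      congr 1
      simp [Finset.sum_ite_eq, Finset.mul_sum]
    -- the Hadamard-product bound
    set S : Matrix (Fin N) (Fin N) ℝ := psdSqrt CE with hS
    have hSt : Sᵀ = S := by
      rw [← Matrix.conjTranspose_eq_transpose_of_trivial]
      exact (psdSqrt_spec hCE).1
    have hSS : S * S = CE := (psdSqrt_spec hCE).2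
    set R : Fin n → Matrix (Fin N) (Fin N) ℝ := fun i => P i * S with hR
    have hΦR : ∀ i j, Φ i j = ∑ a, ∑ m, R i a m * R j a m := by
      intro i j
      have hRjt : S * (P j)ᵀ = (R j)ᵀ := by
        rw [hR]; dsimp only; rw [Matrix.transpose_mul, hSt]
      rw [hΦ]
      dsimp only
      rw [← hSS, ← Matrix.mul_assoc, Matrix.mul_assoc (P i * S) S ((P j)ᵀ), hRjt]
      exact trace_mul_transpose_sum (R i) (R j)
    have hHad : ∑ i, ∑ j, (x i * A i j * x j) * Φ i j ≤ σ * ∑ i, x i^2 * Φ i i := by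
      calc ∑ i, ∑ j, (x i * A i j * x j) * Φ i j
          = ∑ i, ∑ j, ∑ a, ∑ m, (x i * R i a m) * A i j * (x j * R j a m) := by
            refine Finset.sum_congr rfl fun i _ => Finset.sum_congr rfl fun j _ => ?_
            rw [hΦR, Finset.mul_sum]
            refine Finset.sum_congr rfl fun a _ => ?_
            rw [Finset.mul_sum]
            exact Finset.sum_congr rfl fun m _ => by ring
        _ = ∑ a, ∑ m, ∑ i, ∑ j, (x i * R i a m) * A i j * (x j * R j a m) :=
            sum_swap_pair _
        _ ≤ ∑ a, ∑ m, σ * ∑ i, (x i * R i a m)^2 := by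
            refine Finset.sum_le_sum fun a _ => Finset.sum_le_sum fun m _ => ?_
            have hq := quad_le_maxEigR hAherm (fun i => x i * R i a m)
            have hdl : (fun i => x i * R i a m) ⬝ᵥ (A *ᵥ fun i => x i * R i a m)
                = ∑ i, ∑ j, (x i * R i a m) * A i j * (x j * R j a m) :=
              dotProduct_mulVec_sum _ _
            have hdr : (fun i => x i * R i a m) ⬝ᵥ (fun i => x i * R i a m)
                = ∑ i, (x i * R i a m)^2 := by
              simp [dotProduct, pow_two]
            rw [hdl, hdr] at hq
            exact hq
        _ = σ * ∑ i, x i^2 * Φ i i := by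
            simp only [← Finset.mul_sum]
            congr 1
            calc ∑ a, ∑ m, ∑ i, (x i * R i a m)^2
                = ∑ a, ∑ i, ∑ m, (x i * R i a m)^2 :=
                  Finset.sum_congr rfl fun a _ => Finset.sum_comm
              _ = ∑ i, ∑ a, ∑ m, (x i * R i a m)^2 := Finset.sum_comm
              _ = ∑ i, x i^2 * Φ i i := by
                  refine Finset.sum_congr rfl fun i _ => ?_
                  rw [hΦR i i, Finset.mul_sum]
                  refine Finset.sum_congr rfl fun a _ => ?_
                  rw [Finset.mul_sum]
                  exact Finset.sum_congr rfl fun m _ => by ring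
    rw [hquad]
    exact sub_nonneg.mpr hHad
  -- Step 7: the decoding matrix algebra
  set Mx : Matrix (Fin k) (Fin k) ℝ := G * Λt⁻¹ * Gᵀ with hMx
  have hΛtt : Λtᵀ = Λt := by
    rw [← Matrix.conjTranspose_eq_transpose_of_trivial]; exact hΛt_pd.1
  have hΛtinv_t : Λt⁻¹ᵀ = Λt⁻¹ := by rw [Matrix.transpose_nonsing_inv, hΛtt]
  have hΛtdet : IsUnit Λt.det := hΛt_pd.det_pos.ne'.isUnit
  have hMxt : Mxᵀ = Mx := by
    rw [hMx, Matrix.transpose_mul, Matrix.transpose_mul, Matrix.transpose_transpose,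
      hΛtinv_t, ← Matrix.mul_assoc]
  have hMxpd : Mx.PosDef := by
    have hinvpd : (Λt⁻¹).PosDef := hΛt_pd.inv
    refine Matrix.PosDef.of_dotProduct_mulVec_pos ?_ ?_
    · rw [Matrix.IsHermitian, Matrix.conjTranspose_eq_transpose_of_trivial, hMxt]
    · intro x hx
      rw [star_trivial]
      have hy : Gᵀ *ᵥ x ≠ 0 := fun h0 => hx (transpose_mulVec_eq_zero G hG x h0)
      have hpos := hinvpd.dotProduct_mulVec_pos hy
      rw [star_trivial] at hpos
      have heq : x ⬝ᵥ (Mx *ᵥ x) = (Gᵀ *ᵥ x) ⬝ᵥ (Λt⁻¹ *ᵥ (Gᵀ *ᵥ x)) := by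
        rw [hMx, ← Matrix.mulVec_mulVec, ← Matrix.mulVec_mulVec,
          Matrix.dotProduct_mulVec x G, ← Matrix.mulVec_transpose]
      rw [heq]
      exact hpos
  have hMxdet : IsUnit Mx.det := hMxpd.det_pos.ne'.isUnit
  have hLmul : L * Λt * Lᵀ = Mx⁻¹ := by
    rw [hL]
    have ht : (Mx⁻¹ * G * Λt⁻¹)ᵀ = Λt⁻¹ * Gᵀ * Mx⁻¹ := by
      rw [Matrix.transpose_mul, Matrix.transpose_mul, hΛtinv_t,
        Matrix.transpose_nonsing_inv, hMxt, ← Matrix.mul_assoc]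
    rw [ht]
    simp only [Matrix.mul_assoc]
    rw [Matrix.mul_nonsing_inv_cancel_left _ _ hΛtdet]
    rw [show G * (Λt⁻¹ * (Gᵀ * Mx⁻¹)) = Mx * Mx⁻¹ by
      rw [hMx]; simp only [Matrix.mul_assoc]]
    rw [Matrix.mul_nonsing_inv _ hMxdet, Matrix.mul_one]
  have hLtL : (Lᵀ * L).PosSemidef := by
    have := Matrix.posSemidef_conjTranspose_mul_self L
    rwa [Matrix.conjTranspose_eq_transpose_of_trivial] at this
  have step1 : ∑ i, ∑ j, (Lᵀ * L) i j * Wm i j ≤ ∑ i, ∑ j, (Lᵀ * L) i j * Λt i j := by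
    have hd : ∑ i, ∑ j, (Lᵀ * L) i j * Λt i j - ∑ i, ∑ j, (Lᵀ * L) i j * Wm i j
        = ((Lᵀ * L) * D).trace := by
      have e1 : ∑ i, ∑ j, (Lᵀ * L) i j * Λt i j - ∑ i, ∑ j, (Lᵀ * L) i j * Wm i j
          = ∑ i, ∑ j, (Lᵀ * L) i j * D i j := by
        simp only [hDdef, Matrix.sub_apply, mul_sub, Finset.sum_sub_distrib]
      rw [e1, sum_mul_eq_trace, Matrix.transpose_mul, Matrix.transpose_transpose]
    have hnn : 0 ≤ ((Lᵀ * L) * D).trace := trace_mul_psd_nonneg hLtL hDpsd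
    linarith [hd, hnn]
  have step2 : ∑ i, ∑ j, (Lᵀ * L) i j * Λt i j = (Mx⁻¹).trace := by
    rw [sum_mul_eq_trace, Matrix.transpose_mul, Matrix.transpose_transpose,
      Matrix.mul_assoc, Matrix.trace_mul_comm, hLmul]
  rw [hLHS]
  have hfin : ∑ i, ∑ j, (Lᵀ * L) i j * (h1 i * h1 j * Ψ i j + A i j * Φ i j)
      = ∑ i, ∑ j, (Lᵀ * L) i j * Wm i j := by
    refine Finset.sum_congr rfl fun i _ => Finset.sum_congr rfl fun j _ => ?_
    simp only [hWm, Matrix.of_apply]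
  rw [hfin]
  exact le_of_le_of_eq step1 step2
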